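/- For every integer k ≥ 2, there exists a graph homomorphism from the Schrijver graph SG(2k+2, k) to the symmetric shift graph S_4. -/

import Mathlib

universe u

/-- An orientation of a simple graph: each edge receives exactly one of its two directions. -/
structure GraphOrientation {V : Type u} (G : SimpleGraph V) where
  dir : V → V → Prop
  adj_iff : ∀ u v, G.Adj u v ↔ (dir u v ∨ dir v u)
  asymm : ∀ u v, dir u v → ¬ dir v u

/-- The closed out-neighborhood of a vertex in an orientation. -/
def GraphOrientation.closedOutNbhd {V : Type u} {G : SimpleGraph V}
    (D : GraphOrientation G) (v : V) : Set V :=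
  insert v {u | D.dir v u}

/-- The directed local chromatic number of an oriented graph: the least `n` such that some
proper coloring of the underlying graph puts at most `n` colors on every closed
out-neighborhood. -/
noncomputable def psiD {V : Type u} {G : SimpleGraph V} (D : GraphOrientation G) : ℕ∞ :=
  sInf {n : ℕ∞ | ∃ c : V → ℕ, (∀ u w, G.Adj u w → c u ≠ c w) ∧
    ∀ v, (c '' D.closedOutNbhd v).encard ≤ n}

/-- `ψ_{d,min}`: the minimum of `ψ_d` over all orientations of `G`. -/
noncomputable def psiDMin {V : Type u} (G : SimpleGraph V) : ℕ∞ :=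
  ⨅ D : GraphOrientation G, psiD D

/-- `f : ZMod n → V` describes a cycle of length `n` in `G`. -/
def SimpleGraph.IsCycleMap {V : Type u} (G : SimpleGraph V) {n : ℕ} (f : ZMod n → V) : Prop :=
  Function.Injective f ∧ ∀ i, G.Adj (f i) (f (i + 1))

/-- The cycle described by `f` is alternating with respect to the direction relation `D`:
exactly one of its vertices is neither a source nor a sink of the cycle. -/
def IsAltCycle {V : Type u} (D : V → V → Prop) {n : ℕ} (f : ZMod n → V) : Prop :=
  ∃! i : ZMod n,
    ¬ ((D (f i) (f (i - 1)) ∧ D (f i) (f (i + 1))) ∨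
       (D (f (i - 1)) (f i) ∧ D (f (i + 1)) (f i)))

/-- The orientation `D` of `G` contains an alternating odd cycle. -/
def HasAltOddCycle {V : Type u} {G : SimpleGraph V} (D : GraphOrientation G) : Prop :=
  ∃ (n : ℕ) (f : ZMod n → V), Odd n ∧ G.IsCycleMap f ∧ IsAltCycle D.dir f

/-- The odd girth of `G`: the length of a shortest odd cycle. -/
noncomputable def oddGirth {V : Type u} (G : SimpleGraph V) : ℕ :=
  sInf {n | Odd n ∧ ∃ f : ZMod n → V, G.IsCycleMap f}

/-- The symmetric shift graph `S_m`. -/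
def shiftGraph (m : ℕ) : SimpleGraph {p : Fin m × Fin m // p.1 ≠ p.2} where
  Adj x y := x.1.2 = y.1.1 ∨ x.1.1 = y.1.2
  symm := ⟨fun _ _ h => h.elim (fun h => Or.inr h.symm) (fun h => Or.inl h.symm)⟩
  loopless := ⟨fun x h => h.elim (fun h => x.2 h.symm) (fun h => x.2 h)⟩

/-- The Kneser graph `KG(n,k)`. -/
def kneserGraph (n k : ℕ) : SimpleGraph {A : Finset (Fin n) // A.card = k} where
  Adj A B := Disjoint A.1 B.1 ∧ A ≠ B
  symm := ⟨fun _ _ h => ⟨h.1.symm, h.2.symm⟩⟩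
  loopless := ⟨fun _ h => h.2 rfl⟩

/-- A subset of `Fin n` (thought of as `[n]` arranged cyclically) is stable if it contains
no two cyclically consecutive elements. -/
def IsStableSet {n : ℕ} (A : Finset (Fin n)) : Prop :=
  ∀ i ∈ A, ∀ j ∈ A, (i.val + 1) % n ≠ j.val

/-- The Schrijver graph `SG(n,k)`. -/
def schrijverGraph (n k : ℕ) :
    SimpleGraph {A : Finset (Fin n) // A.card = k ∧ IsStableSet A} where
  Adj A B := Disjoint A.1 B.1 ∧ A ≠ B
  symm := ⟨fun _ _ h => ⟨h.1.symm, h.2.symm⟩⟩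
  loopless := ⟨fun _ h => h.2 rfl⟩

/-- The `r`-level generalized Mycielskian `M_r(G)`; `none` is the apex vertex `z`. -/
def genMycielskian {V : Type u} (G : SimpleGraph V) (r : ℕ) :
    SimpleGraph (Option (V × Fin r)) where
  Adj x y :=
    match x, y with
    | some (u, i), some (v, j) =>
        G.Adj u v ∧ (i.val + 1 = j.val ∨ j.val + 1 = i.val ∨ (i.val = 0 ∧ j.val = 0))
    | some (_, i), none => i.val = r - 1
    | none, some (_, j) => j.val = r - 1
    | none, none => False
  symm := by
    refine ⟨?_⟩
    rintro (_ | ⟨u, i⟩) (_ | ⟨v, j⟩) h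
    · exact h
    · exact h
    · exact h
    · exact ⟨h.1.symm, by tauto⟩
  loopless := by
    refine ⟨?_⟩
    rintro (_ | ⟨u, i⟩) h
    · exact h
    · exact G.ne_of_adj h.1 rfl


section Aux

def Ftab (q a b : ℕ) : ℕ × ℕ :=
  if b + 1 = a ∨ (a = 0 ∧ b + 1 = q) then
    (if a = 1 then (2,3) else if a = 0 then (0,3) else (1,3))
  else if b = a then
    (if a + 1 = q then (3,0) else if a = 0 then (3,2) else (3,1))
  else if b < a then (1,0)
  else if a = 0 then (0,2)
  else if b + 1 = q then (2,1)
  else (0,1)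

lemma Ftab_ne (q a b : ℕ) : (Ftab q a b).1 ≠ (Ftab q a b).2 := by
  unfold Ftab; split_ifs <;> simp

lemma Ftab_lt4 (q a b : ℕ) : (Ftab q a b).1 < 4 ∧ (Ftab q a b).2 < 4 := by
  unfold Ftab; split_ifs <;> simp

set_option maxHeartbeats 4000000 in
lemma Ftab_compat (q a b a' b' : ℕ) (hq : 3 ≤ q)
    (ha : a < q) (hb : b < q) (ha' : a' < q) (hb' : b' < q)
    (hrel :
      (((a' = b ∨ a' = b + 1 ∨ (b + 1 = q ∧ a' = 0)) ∧
        (b' = a ∨ b' + 1 = a ∨ (a = 0 ∧ b' + 1 = q))) ∧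
        (¬ (b = a ∨ b + 1 = a ∨ (a = 0 ∧ b + 1 = q)) ∨
         ¬ (b' = a' ∨ b' + 1 = a' ∨ (a' = 0 ∧ b' + 1 = q)))) ∨
      ((b + 1 = a ∨ (a = 0 ∧ b + 1 = q)) ∧ b' = a') ∨
      (b = a ∧ (b' + 1 = a' ∨ (a' = 0 ∧ b' + 1 = q)))) :
    (Ftab q a b).2 = (Ftab q a' b').1 ∨ (Ftab q a b).1 = (Ftab q a' b').2 := by
  unfold Ftab
  split_ifs <;> simp <;> omega


open Finset
open Fin.NatCast Fin.CommRing

variable {k : ℕ}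

lemma fin_val_one (k : ℕ) : (1 : Fin (2*k+2)).val = 1 := rfl

lemma val_add_one (i : Fin (2*k+2)) :
    (i + 1).val = if i.val + 1 = 2*k+2 then 0 else i.val + 1 := by
  have hi := i.isLt
  rw [Fin.add_def, fin_val_one]
  split_ifs with h
  · rw [h]; exact Nat.mod_self _
  · exact Nat.mod_eq_of_lt (by omega)

lemma val_add_one_par (i : Fin (2*k+2)) : (i + 1).val % 2 = (i.val + 1) % 2 := by
  rw [val_add_one]; split_ifs with h <;> omega

lemma stable_pair {A : Finset (Fin (2*k+2))} (hA : IsStableSet A) {i : Fin (2*k+2)}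
    (h1 : i ∈ A) (h2 : i + 1 ∈ A) : False :=
  hA i h1 (i+1) h2 (by rw [Fin.add_def, fin_val_one])

lemma val_sub_one (a : Fin (2*k+2)) :
    (a - 1).val = if a.val = 0 then 2*k+1 else a.val - 1 := by
  have ha := a.isLt
  have h1 : (a - 1).val = (2*k+2 - 1 + a.val) % (2*k+2) := by
    rw [Fin.sub_def]; rfl
  rw [h1]
  split_ifs with h
  · rw [h]; exact Nat.mod_eq_of_lt (by omega)
  · rw [(by omega : 2*k+2-1 + a.val = (a.val - 1) + (2*k+2)), Nat.add_mod_right]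
    exact Nat.mod_eq_of_lt (by omega)

lemma markers_exist (A : Finset (Fin (2*k+2))) (hst : IsStableSet A) (hcard : A.card = k) :
    ∃ e o : Fin (2*k+2), e.val % 2 = 0 ∧ o.val % 2 = 1 ∧
      ∀ i, (i ∉ A ∧ i + 1 ∉ A) ↔ (i = e ∨ i = o) := by
  classical
  set M : Finset (Fin (2*k+2)) := Aᶜ.filter (fun i => ¬ (i + 1 ∈ A)) with hM
  set T : Finset (Fin (2*k+2)) := Aᶜ.filter (fun i => i + 1 ∈ A) with hT
  have hMem : ∀ i : Fin (2*k+2), i ∈ M ↔ (i ∉ A ∧ i + 1 ∉ A) := by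
    intro i; simp [hM, Finset.mem_filter, Finset.mem_compl]
  have hcompl : Aᶜ.card = k + 2 := by
    rw [Finset.card_compl, hcard, Fintype.card_fin]; omega
  have hTA : T.card = A.card := by
    apply Finset.card_bij (fun a _ => a + 1)
    · intro a ha; exact (Finset.mem_filter.mp ha).2
    · intro a _ b _ h; exact add_right_cancel h
    · intro b hb
      refine ⟨b - 1, ?_, by rw [sub_add_cancel]⟩
      rw [hT, Finset.mem_filter, Finset.mem_compl, sub_add_cancel]
      refine ⟨?_, hb⟩
      intro hb1
      exact stable_pair hst hb1 (by rwa [sub_add_cancel])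
  have hMcard : M.card = 2 := by
    have := Finset.card_filter_add_card_filter_not
      (s := Aᶜ) (p := fun i => i + 1 ∈ A)
    rw [← hT, ← hM] at this
    omega
  -- the even elements
  set Ev : Finset (Fin (2*k+2)) := univ.filter (fun i => i.val % 2 = 0) with hEv
  have hEvMem : ∀ i : Fin (2*k+2), i ∈ Ev ↔ i.val % 2 = 0 := by
    intro i; simp [hEv]
  have hEvCard : Ev.card = k + 1 := by
    rw [show k + 1 = (univ : Finset (Fin (k+1))).card by simp]
    apply Finset.card_bij (fun a _ => (⟨a.val / 2, by have := a.isLt; omega⟩ : Fin (k+1)))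
    · intro a ha; exact Finset.mem_univ _
    · intro a ha b hb h
      have ha' := (hEvMem a).mp ha
      have hb' := (hEvMem b).mp hb
      have := congrArg Fin.val h
      simp only at this
      exact Fin.ext (by omega)
    · intro j _
      refine ⟨⟨2 * j.val, by have := j.isLt; omega⟩, (hEvMem _).mpr (by simp [Nat.mul_mod_right]), ?_⟩
      apply Fin.ext
      simp [Nat.mul_div_cancel_left _ (by norm_num : 0 < 2)]
  -- bijection between Ev \ M and A
  have hEvM : (Ev \ M).card = A.card := by
    apply Finset.card_bij (fun a _ => if a ∈ A then a else a + 1)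
    · intro a ha
      rw [Finset.mem_sdiff] at ha
      by_cases h : a ∈ A
      · rwa [if_pos h]
      · rw [if_neg h]
        by_contra h2
        exact ha.2 ((hMem a).mpr ⟨h, h2⟩)
    · intro a ha b hb h
      rw [Finset.mem_sdiff] at ha hb
      have hae := (hEvMem a).mp ha.1
      have hbe := (hEvMem b).mp hb.1
      by_cases h1 : a ∈ A <;> by_cases h2 : b ∈ A
      · rwa [if_pos h1, if_pos h2] at h
      · rw [if_pos h1, if_neg h2] at h
        have := congrArg Fin.val h
        rw [val_add_one] at this
        split_ifs at this <;> omega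
      · rw [if_neg h1, if_pos h2] at h
        have := congrArg Fin.val h
        rw [val_add_one] at this
        split_ifs at this <;> omega
      · rw [if_neg h1, if_neg h2] at h
        exact add_right_cancel h
    · intro b hb
      by_cases hbe : b.val % 2 = 0
      · refine ⟨b, ?_, by rw [if_pos hb]⟩
        rw [Finset.mem_sdiff]
        refine ⟨(hEvMem b).mpr hbe, ?_⟩
        intro hbM
        exact ((hMem b).mp hbM).1 hb
      · refine ⟨b - 1, ?_, ?_⟩
        · rw [Finset.mem_sdiff]
          have hbv : (b - 1).val % 2 = 0 := by
            rw [val_sub_one]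
            have := b.isLt
            split_ifs <;> omega
          refine ⟨(hEvMem _).mpr hbv, ?_⟩
          intro hM1
          have := ((hMem _).mp hM1).2
          rw [sub_add_cancel] at this
          exact this hb
        · have hb1 : b - 1 ∉ A := by
            intro h
            exact stable_pair hst h (by rwa [sub_add_cancel])
          rw [if_neg hb1, sub_add_cancel]
  -- counting: Ev ∩ M has exactly one element
  have hsplit : (Ev ∩ M).card + (Ev \ M).card = Ev.card :=
    Finset.card_inter_add_card_sdiff Ev M
  have hEM1 : (Ev ∩ M).card = 1 := by omega
  obtain ⟨e, he⟩ := Finset.card_eq_one.mp hEM1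
  obtain ⟨x, y, hxy, hMxy⟩ := Finset.card_eq_two.mp hMcard
  have heM : e ∈ Ev ∩ M := he ▸ Finset.mem_singleton_self e
  have heEv : e.val % 2 = 0 := (hEvMem e).mp (Finset.mem_inter.mp heM).1
  have heM' : e ∈ M := (Finset.mem_inter.mp heM).2
  -- the other element of M is odd
  have hodd : ∀ z, z ∈ M → z ≠ e → z.val % 2 = 1 := by
    intro z hz hne
    by_contra h
    have hz0 : z.val % 2 = 0 := by omega
    have : z ∈ Ev ∩ M := Finset.mem_inter.mpr ⟨(hEvMem z).mpr hz0, hz⟩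
    rw [he, Finset.mem_singleton] at this
    exact hne this
  have hex : e = x ∨ e = y := by
    have := heM'
    rw [hMxy] at this
    simpa using this
  rcases hex with rfl | rfl
  · refine ⟨e, y, heEv, hodd y (hMxy ▸ (by simp)) (Ne.symm hxy), ?_⟩
    intro i
    rw [← hMem i, hMxy]
    simp
  · refine ⟨e, x, heEv, hodd x (hMxy ▸ (by simp)) hxy, ?_⟩
    intro i
    rw [← hMem i, hMxy]
    simp [or_comm]


variable {k : ℕ}


lemma natCast_val (c : ℕ) : ((c : Fin (2*k+2))).val = c % (2*k+2) := by
  rw [Fin.val_natCast]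

lemma add_natCast_val (i : Fin (2*k+2)) (c : ℕ) (hc : c < 2*k+2) :
    (i + (c : Fin (2*k+2))).val =
      if i.val + c < 2*k+2 then i.val + c else i.val + c - (2*k+2) := by
  have hi := i.isLt
  have h1 : (i + (c : Fin (2*k+2))).val
      = (i.val + ((c : Fin (2*k+2))).val) % (2*k+2) := by rw [Fin.add_def]
  rw [natCast_val, Nat.mod_eq_of_lt hc] at h1
  rw [h1]
  split_ifs with h
  · exact Nat.mod_eq_of_lt h
  · rw [Nat.mod_eq_sub_mod (by omega)]
    exact Nat.mod_eq_of_lt (by omega)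

lemma add_natCast_ne (i : Fin (2*k+2)) (c : ℕ) (hc1 : 0 < c) (hc2 : c < 2*k+2) :
    i + (c : Fin (2*k+2)) ≠ i := by
  intro h
  have := congrArg Fin.val h
  rw [add_natCast_val i c hc2] at this
  have hi := i.isLt
  split_ifs at this <;> omega

lemma near_class (hk : 2 ≤ k) (A : Finset (Fin (2*k+2))) (hst : IsStableSet A)
    (x : Fin (2*k+2))
    (hcrit : ∀ i, (i ∉ A ∧ i + 1 ∉ A) ↔ (i = x ∨ i = x + 1)) :
    ∀ z : Fin (2*k+2), z.val % 2 = (x+1).val % 2 → z ≠ x + 1 → z ∈ A := by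
  have hx := x.isLt
  have hxm : x ∉ A ∧ x + 1 ∉ A := (hcrit x).mpr (Or.inl rfl)
  have hx1m : x + 1 ∉ A ∧ x + 1 + 1 ∉ A := (hcrit (x+1)).mpr (Or.inr rfl)
  have cast_succ : ∀ c : ℕ, ((c+1 : ℕ) : Fin (2*k+2)) = ((c:ℕ) : Fin (2*k+2)) + 1 := by
    intro c; push_cast; ring
  have key : ∀ m, 1 ≤ m → m ≤ k → x + ((2*m+1 : ℕ) : Fin (2*k+2)) ∈ A := by
    intro m
    induction m with
    | zero => omega
    | succ m ih =>
      intro _ hm1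
      rcases Nat.eq_zero_or_pos m with rfl | hm0
      · -- base : x + 3 ∈ A
        have h2 : x + ((2:ℕ) : Fin (2*k+2)) = x + 1 + 1 := by push_cast; ring
        have hi2 : x + ((2:ℕ) : Fin (2*k+2)) ∉ A := by rw [h2]; exact hx1m.2
        have hne1 : x + ((2:ℕ) : Fin (2*k+2)) ≠ x := add_natCast_ne x 2 (by omega) (by omega)
        have h2v : ((2:ℕ) : Fin (2*k+2)).val = 2 := by
          rw [natCast_val]; exact Nat.mod_eq_of_lt (by omega)
        have hne2 : x + ((2:ℕ) : Fin (2*k+2)) ≠ x + 1 := by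
          intro h
          have h' := congrArg Fin.val (add_left_cancel h)
          rw [h2v, fin_val_one] at h'
          omega
        have := (hcrit (x + ((2:ℕ) : Fin (2*k+2)))).not.mpr (by push_neg; exact ⟨hne1, hne2⟩)
        push_neg at this
        have h3 : x + ((2:ℕ) : Fin (2*k+2)) + 1 = x + ((2*1+1 : ℕ) : Fin (2*k+2)) := by
          push_cast; ring
        rw [← h3]
        exact this hi2
      · -- step
        have hw : x + ((2*m+1 : ℕ) : Fin (2*k+2)) ∈ A := ih hm0 (by omega)
        set u : Fin (2*k+2) := x + ((2*m+2 : ℕ) : Fin (2*k+2)) with hu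
        have huw : u = x + ((2*m+1:ℕ) : Fin (2*k+2)) + 1 := by rw [hu]; push_cast; ring
        have huA : u ∉ A := by
          intro h
          exact stable_pair hst hw (by rwa [← huw])
        have hne1 : u ≠ x := add_natCast_ne x (2*m+2) (by omega) (by omega)
        have hne2 : u ≠ x + 1 := by
          intro h
          have h4 : x + ((2*m+1:ℕ) : Fin (2*k+2)) = x := by
            apply add_right_cancel (b := (1 : Fin (2*k+2)))
            rw [← huw, h]
          exact add_natCast_ne x (2*m+1) (by omega) (by omega) h4
        have := (hcrit u).not.mpr (by push_neg; exact ⟨hne1, hne2⟩)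
        push_neg at this
        have h5 : u + 1 = x + ((2*(m+1)+1 : ℕ) : Fin (2*k+2)) := by
          rw [hu]; push_cast; ring
        rw [← h5]
        exact this huA
  -- coverage
  intro z hpar hne
  obtain ⟨sv, hsv⟩ : ∃ t, t = (x+1).val := ⟨_, rfl⟩
  have hz := z.isLt
  have hs2 : sv < 2*k+2 := hsv ▸ (x+1).isLt
  have hpar' : z.val % 2 = sv % 2 := by rw [hsv]; exact hpar
  have hvne : z.val ≠ sv := by rw [hsv]; exact fun h => hne (Fin.ext h)
  have cover : ∃ m, 1 ≤ m ∧ m ≤ k ∧ z = (x+1) + ((2*m : ℕ) : Fin (2*k+2)) := by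
    by_cases hle : sv ≤ z.val
    · refine ⟨(z.val - sv)/2, by omega, by omega, ?_⟩
      apply Fin.ext
      rw [add_natCast_val (x+1) _ (by omega), ← hsv]
      split_ifs with h <;> omega
    · refine ⟨(z.val + (2*k+2) - sv)/2, by omega, by omega, ?_⟩
      apply Fin.ext
      rw [add_natCast_val (x+1) _ (by omega), ← hsv]
      split_ifs with h <;> omega
  obtain ⟨m, hm1, hm2, rfl⟩ := cover
  have h6 : (x+1) + ((2*m : ℕ) : Fin (2*k+2)) = x + ((2*m+1 : ℕ) : Fin (2*k+2)) := by
    push_cast; ring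
  rw [h6]
  exact key m hm1 hm2
lemma parity_neq {u v : Fin (2*k+2)} (h : ¬ u.val % 2 = v.val % 2) : u ≠ v :=
  fun he => h (by rw [he])

lemma succ_parity (v : Fin (2*k+2)) : (v + 1).val % 2 = (v.val + 1) % 2 :=
  val_add_one_par v

lemma self_ne_succ (x : Fin (2*k+2)) : x ≠ x + 1 := by
  apply parity_neq
  rw [succ_parity]
  omega

lemma main_rel (hk : 2 ≤ k) {A B : Finset (Fin (2*k+2))}
    (hstA : IsStableSet A) (hstB : IsStableSet B)
    (hcA : A.card = k) (hcB : B.card = k) (hd : Disjoint A B)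
    {eA oA eB oB : Fin (2*k+2)}
    (hpeA : eA.val % 2 = 0) (hpoA : oA.val % 2 = 1)
    (hpeB : eB.val % 2 = 0) (hpoB : oB.val % 2 = 1)
    (critA : ∀ i, (i ∉ A ∧ i + 1 ∉ A) ↔ (i = eA ∨ i = oA))
    (critB : ∀ i, (i ∉ B ∧ i + 1 ∉ B) ↔ (i = eB ∨ i = oB))
    (hfar1 : ¬ oA + 1 = eA) (hfar2 : ¬ eA + 1 = oA) :
    (eB = oA + 1 ∨ eB + 1 = oA) ∧ (oB = eA + 1 ∨ oB + 1 = eA) := by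
  classical
  set U : Finset (Fin (2*k+2)) := (A ∪ B)ᶜ with hU
  have hUmem : ∀ i, i ∈ U ↔ (i ∉ A ∧ i ∉ B) := by
    intro i
    simp [hU, Finset.mem_compl, Finset.mem_union, not_or]
  have hU2 : U.card = 2 := by
    rw [hU, Finset.card_compl, Finset.card_union_of_disjoint hd, hcA, hcB,
      Fintype.card_fin]
    omega
  have inUA : ∀ i : Fin (2*k+2), i ∉ A → i + 1 ∉ A → i ∈ U ∨ i + 1 ∈ U := by
    intro i h1 h2
    by_contra hcon
    push_neg at hcon
    obtain ⟨hc1, hc2⟩ := hcon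
    have hb1 : i ∈ B := by
      have := (hUmem i).not.mp hc1
      push_neg at this
      exact this h1
    have hb2 : i + 1 ∈ B := by
      have := (hUmem (i+1)).not.mp hc2
      push_neg at this
      exact this h2
    exact stable_pair hstB hb1 hb2
  have inUB : ∀ i : Fin (2*k+2), i ∉ B → i + 1 ∉ B → i ∈ U ∨ i + 1 ∈ U := by
    intro i h1 h2
    by_contra hcon
    push_neg at hcon
    obtain ⟨hc1, hc2⟩ := hcon
    have hb1 : i ∈ A := by
      have := (hUmem i).not.mp hc1
      push_neg at this
      by_contra hA'
      exact h1 (this hA')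
    have hb2 : i + 1 ∈ A := by
      have := (hUmem (i+1)).not.mp hc2
      push_neg at this
      by_contra hA'
      exact h2 (this hA')
    exact stable_pair hstA hb1 hb2
  have hmA_e : eA ∉ A ∧ eA + 1 ∉ A := (critA eA).mpr (Or.inl rfl)
  have hmA_o : oA ∉ A ∧ oA + 1 ∉ A := (critA oA).mpr (Or.inr rfl)
  have hmB_e : eB ∉ B ∧ eB + 1 ∉ B := (critB eB).mpr (Or.inl rfl)
  have hmB_o : oB ∉ B ∧ oB + 1 ∉ B := (critB oB).mpr (Or.inr rfl)
  obtain ⟨α, hαU, hα⟩ : ∃ α, α ∈ U ∧ (α = eA ∨ α = eA + 1) := by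
    rcases inUA eA hmA_e.1 hmA_e.2 with h | h
    · exact ⟨eA, h, Or.inl rfl⟩
    · exact ⟨eA + 1, h, Or.inr rfl⟩
  obtain ⟨β, hβU, hβ⟩ : ∃ β, β ∈ U ∧ (β = oA ∨ β = oA + 1) := by
    rcases inUA oA hmA_o.1 hmA_o.2 with h | h
    · exact ⟨oA, h, Or.inl rfl⟩
    · exact ⟨oA + 1, h, Or.inr rfl⟩
  have hαβ : α ≠ β := by
    rcases hα with rfl | rfl <;> rcases hβ with rfl | rfl
    · exact parity_neq (by omega)
    · exact fun h => hfar1 h.symm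
    · exact hfar2
    · intro h
      exact parity_neq (u := eA) (v := oA) (by omega) (add_right_cancel h)
  have hUeq : U = {α, β} := by
    symm
    apply Finset.eq_of_subset_of_card_le
    · intro x hx
      rcases Finset.mem_insert.mp hx with rfl | hx
      · exact hαU
      · rw [Finset.mem_singleton.mp hx]; exact hβU
    · rw [hU2, Finset.card_insert_of_notMem (by simpa using hαβ),
        Finset.card_singleton]
  have hUcases : ∀ x, x ∈ U → x = α ∨ x = β := by
    intro x hx
    rw [hUeq] at hx
    simpa using hx
  -- a marker shared by A and B leads to a contradiction
  have shared : ∀ x : Fin (2*k+2), x ∉ A → x + 1 ∉ A → x ∉ B → x + 1 ∉ B → False := by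
    intro x ha1 ha2 hb1 hb2
    have hxU : x ∈ U := (hUmem x).mpr ⟨ha1, hb1⟩
    have hx1U : x + 1 ∈ U := (hUmem (x+1)).mpr ⟨ha2, hb2⟩
    rcases hUcases x hxU with h1 | h1 <;> rcases hUcases (x+1) hx1U with h2 | h2
    · exact self_ne_succ x (h1.trans h2.symm)
    · -- x = α, x + 1 = β
      rcases hα with hα' | hα' <;> rcases hβ with hβ' | hβ'
      · have e1 : x = eA := h1.trans hα'
        have e2 : x + 1 = oA := h2.trans hβ'
        exact hfar2 (by rw [← e1]; exact e2)
      · have e1 : x = eA := h1.trans hα'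
        have e2 : x + 1 = oA + 1 := h2.trans hβ'
        have e3 : x = oA := add_right_cancel e2
        exact parity_neq (u := eA) (v := oA) (by omega) (e1.symm.trans e3)
      · have e1 : x = eA + 1 := h1.trans hα'
        have e2 : x + 1 = oA := h2.trans hβ'
        have q1 := congrArg Fin.val e1
        have q2 := congrArg Fin.val e2
        have p1 := succ_parity x
        have p2 := succ_parity eA
        omega
      · have e1 : x = eA + 1 := h1.trans hα'
        have e2 : x + 1 = oA + 1 := h2.trans hβ'
        have e3 : x = oA := add_right_cancel e2
        exact hfar2 (e1.symm.trans e3)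
    · -- x = β, x + 1 = α
      rcases hβ with hβ' | hβ' <;> rcases hα with hα' | hα'
      · have e1 : x = oA := h1.trans hβ'
        have e2 : x + 1 = eA := h2.trans hα'
        exact hfar1 (by rw [← e1]; exact e2)
      · have e1 : x = oA := h1.trans hβ'
        have e2 : x + 1 = eA + 1 := h2.trans hα'
        have e3 : x = eA := add_right_cancel e2
        exact parity_neq (u := oA) (v := eA) (by omega) (e1.symm.trans e3)
      · have e1 : x = oA + 1 := h1.trans hβ'
        have e2 : x + 1 = eA := h2.trans hα'
        have q1 := congrArg Fin.val e1
        have q2 := congrArg Fin.val e2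
        have p1 := succ_parity x
        have p2 := succ_parity oA
        omega
      · have e1 : x = oA + 1 := h1.trans hβ'
        have e2 : x + 1 = eA + 1 := h2.trans hα'
        have e3 : x = eA := add_right_cancel e2
        exact hfar1 (e1.symm.trans e3)
    · exact self_ne_succ x (h1.trans h2.symm)
  constructor
  · -- the even B-marker
    rcases inUB eB hmB_e.1 hmB_e.2 with h | h <;> rcases hUcases _ h with h1 | h1
    · rcases hα with hα' | hα'
      · have e3 : eB = eA := h1.trans hα'
        have hb := hmB_e
        rw [e3] at hb
        exact (shared eA hmA_e.1 hmA_e.2 hb.1 hb.2).elim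
      · have e3 : eB = eA + 1 := h1.trans hα'
        have q1 := congrArg Fin.val e3
        have p2 := succ_parity eA
        omega
    · rcases hβ with hβ' | hβ'
      · have e3 : eB = oA := h1.trans hβ'
        have q1 := congrArg Fin.val e3
        omega
      · exact Or.inl (h1.trans hβ')
    · rcases hα with hα' | hα'
      · have e3 : eB + 1 = eA := h1.trans hα'
        have q1 := congrArg Fin.val e3
        have p1 := succ_parity eB
        omega
      · have e3 : eB = eA := add_right_cancel (h1.trans hα')
        have hb := hmB_e
        rw [e3] at hb
        exact (shared eA hmA_e.1 hmA_e.2 hb.1 hb.2).elim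
    · rcases hβ with hβ' | hβ'
      · exact Or.inr (h1.trans hβ')
      · have e3 : eB = oA := add_right_cancel (h1.trans hβ')
        have q1 := congrArg Fin.val e3
        omega
  · -- the odd B-marker
    rcases inUB oB hmB_o.1 hmB_o.2 with h | h <;> rcases hUcases _ h with h1 | h1
    · rcases hα with hα' | hα'
      · have e3 : oB = eA := h1.trans hα'
        have q1 := congrArg Fin.val e3
        omega
      · exact Or.inl (h1.trans hα')
    · rcases hβ with hβ' | hβ'
      · have e3 : oB = oA := h1.trans hβ'
        have hb := hmB_o
        rw [e3] at hb
        exact (shared oA hmA_o.1 hmA_o.2 hb.1 hb.2).elim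
      · have e3 : oB = oA + 1 := h1.trans hβ'
        have q1 := congrArg Fin.val e3
        have p2 := succ_parity oA
        omega
    · rcases hα with hα' | hα'
      · exact Or.inr (h1.trans hα')
      · have e3 : oB = eA := add_right_cancel (h1.trans hα')
        have q1 := congrArg Fin.val e3
        omega
    · rcases hβ with hβ' | hβ'
      · have e3 : oB + 1 = oA := h1.trans hβ'
        have q1 := congrArg Fin.val e3
        have p1 := succ_parity oB
        omega
      · have e3 : oB = oA := add_right_cancel (h1.trans hβ')
        have hb := hmB_o
        rw [e3] at hb
        exact (shared oA hmA_o.1 hmA_o.2 hb.1 hb.2).elim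
lemma rel_of_disjoint (hk : 2 ≤ k) {A B : Finset (Fin (2*k+2))}
    (hstA : IsStableSet A) (hstB : IsStableSet B)
    (hcA : A.card = k) (hcB : B.card = k) (hd : Disjoint A B)
    {eA oA eB oB : Fin (2*k+2)}
    (hpeA : eA.val % 2 = 0) (hpoA : oA.val % 2 = 1)
    (hpeB : eB.val % 2 = 0) (hpoB : oB.val % 2 = 1)
    (critA : ∀ i, (i ∉ A ∧ i + 1 ∉ A) ↔ (i = eA ∨ i = oA))
    (critB : ∀ i, (i ∉ B ∧ i + 1 ∉ B) ↔ (i = eB ∨ i = oB)) :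
    (((eB = oA + 1 ∨ eB + 1 = oA) ∧ (oB = eA + 1 ∨ oB + 1 = eA)) ∧
      (¬(oA + 1 = eA ∨ eA + 1 = oA) ∨ ¬(oB + 1 = eB ∨ eB + 1 = oB))) ∨
    (oA + 1 = eA ∧ eB + 1 = oB) ∨ (eA + 1 = oA ∧ oB + 1 = eB) := by
  by_cases hA : oA + 1 = eA ∨ eA + 1 = oA
  · by_cases hB : oB + 1 = eB ∨ eB + 1 = oB
    · rcases hA with hA1 | hA1 <;> rcases hB with hB1 | hB1
      · -- both of "even class" type : contradiction with disjointness
        have critA' : ∀ i, (i ∉ A ∧ i + 1 ∉ A) ↔ (i = oA ∨ i = oA + 1) := by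
          intro i; rw [critA i, ← hA1]; tauto
        have critB' : ∀ i, (i ∉ B ∧ i + 1 ∉ B) ↔ (i = oB ∨ i = oB + 1) := by
          intro i; rw [critB i, ← hB1]; tauto
        have hclsA := near_class hk A hstA oA critA'
        have hclsB := near_class hk B hstB oB critB'
        have h1 := (oA+1).isLt
        have h2 := (oB+1).isLt
        obtain ⟨zv, hzlt, hzpar, hz1, hz2⟩ :
            ∃ zv, zv < 2*k+2 ∧ zv % 2 = 0 ∧ zv ≠ (oA+1).val ∧ zv ≠ (oB+1).val := by
          refine ⟨if (oA+1).val ≠ 0 ∧ (oB+1).val ≠ 0 then 0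
            else if (oA+1).val ≠ 2 ∧ (oB+1).val ≠ 2 then 2 else 4, ?_⟩
          split_ifs <;> omega
        have p1 := succ_parity oA
        have p2 := succ_parity oB
        have hzA : (⟨zv, hzlt⟩ : Fin (2*k+2)) ∈ A :=
          hclsA _ (by show zv % 2 = _; omega) (Fin.ne_of_val_ne hz1)
        have hzB : (⟨zv, hzlt⟩ : Fin (2*k+2)) ∈ B :=
          hclsB _ (by show zv % 2 = _; omega) (Fin.ne_of_val_ne hz2)
        exact absurd hzB (Finset.disjoint_left.mp hd hzA)
      · exact Or.inr (Or.inl ⟨hA1, hB1⟩)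
      · exact Or.inr (Or.inr ⟨hA1, hB1⟩)
      · -- both of "odd class" type : contradiction with disjointness
        have critA' : ∀ i, (i ∉ A ∧ i + 1 ∉ A) ↔ (i = eA ∨ i = eA + 1) := by
          intro i; rw [critA i, ← hA1]
        have critB' : ∀ i, (i ∉ B ∧ i + 1 ∉ B) ↔ (i = eB ∨ i = eB + 1) := by
          intro i; rw [critB i, ← hB1]
        have hclsA := near_class hk A hstA eA critA'
        have hclsB := near_class hk B hstB eB critB'
        have h1 := (eA+1).isLt
        have h2 := (eB+1).isLt
        obtain ⟨zv, hzlt, hzpar, hz1, hz2⟩ :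
            ∃ zv, zv < 2*k+2 ∧ zv % 2 = 1 ∧ zv ≠ (eA+1).val ∧ zv ≠ (eB+1).val := by
          refine ⟨if (eA+1).val ≠ 1 ∧ (eB+1).val ≠ 1 then 1
            else if (eA+1).val ≠ 3 ∧ (eB+1).val ≠ 3 then 3 else 5, ?_⟩
          split_ifs <;> omega
        have p1 := succ_parity eA
        have p2 := succ_parity eB
        have hzA : (⟨zv, hzlt⟩ : Fin (2*k+2)) ∈ A :=
          hclsA _ (by show zv % 2 = _; omega) (Fin.ne_of_val_ne hz1)
        have hzB : (⟨zv, hzlt⟩ : Fin (2*k+2)) ∈ B :=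
          hclsB _ (by show zv % 2 = _; omega) (Fin.ne_of_val_ne hz2)
        exact absurd hzB (Finset.disjoint_left.mp hd hzA)
    · have hB' := hB
      push_neg at hB'
      have hmain := main_rel hk hstB hstA hcB hcA hd.symm hpeB hpoB hpeA hpoA
        critB critA hB'.1 hB'.2
      refine Or.inl ⟨⟨?_, ?_⟩, Or.inr hB⟩
      · rcases hmain.2 with h | h
        · exact Or.inr h.symm
        · exact Or.inl h.symm
      · rcases hmain.1 with h | h
        · exact Or.inr h.symm
        · exact Or.inl h.symm
  · have hA' := hA
    push_neg at hA'
    have hmain := main_rel hk hstA hstB hcA hcB hd hpeA hpoA hpeB hpoB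
      critA critB hA'.1 hA'.2
    exact Or.inl ⟨hmain, Or.inl hA⟩
/-- Even-marker coordinate. -/
def coE (q e : ℕ) : ℕ := if e/2 + 1 = q then 0 else e/2 + 1
/-- Odd-marker coordinate. -/
def coO (q o : ℕ) : ℕ := if (o+1)/2 = q then 0 else (o+1)/2

lemma coE_lt (hk : 2 ≤ k) (e : Fin (2*k+2)) : coE (k+1) e.val < k+1 := by
  have := e.isLt; unfold coE; split_ifs <;> omega

lemma coO_lt (hk : 2 ≤ k) (o : Fin (2*k+2)) : coO (k+1) o.val < k+1 := by
  have := o.isLt; unfold coO; split_ifs <;> omega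

lemma trA (hk : 2 ≤ k) (e o : Fin (2*k+2)) (hpe : e.val % 2 = 0) (hpo : o.val % 2 = 1)
    (h : e = o + 1) :
    coE (k+1) e.val = coO (k+1) o.val + 1 ∨
      (coO (k+1) o.val + 1 = k+1 ∧ coE (k+1) e.val = 0) := by
  have he := e.isLt; have ho := o.isLt
  have hv := congrArg Fin.val h
  rw [val_add_one] at hv
  unfold coE coO
  split_ifs at hv ⊢ <;> omega

lemma trB (hk : 2 ≤ k) (e o : Fin (2*k+2)) (hpe : e.val % 2 = 0) (hpo : o.val % 2 = 1)
    (h : e + 1 = o) : coE (k+1) e.val = coO (k+1) o.val := by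
  have he := e.isLt; have ho := o.isLt
  have hv := congrArg Fin.val h
  rw [val_add_one] at hv
  unfold coE coO
  split_ifs at hv ⊢ <;> omega

lemma trC (hk : 2 ≤ k) (e o : Fin (2*k+2)) (hpe : e.val % 2 = 0) (hpo : o.val % 2 = 1)
    (h : o + 1 = e) :
    coO (k+1) o.val + 1 = coE (k+1) e.val ∨
      (coE (k+1) e.val = 0 ∧ coO (k+1) o.val + 1 = k+1) := by
  have he := e.isLt; have ho := o.isLt
  have hv := congrArg Fin.val h
  rw [val_add_one] at hv
  unfold coE coO
  split_ifs at hv ⊢ <;> omega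

lemma trB_rev (hk : 2 ≤ k) (e o : Fin (2*k+2)) (hpe : e.val % 2 = 0) (hpo : o.val % 2 = 1)
    (h : coO (k+1) o.val = coE (k+1) e.val) : e + 1 = o := by
  have he := e.isLt; have ho := o.isLt
  apply Fin.ext
  rw [val_add_one]
  unfold coE coO at h
  split_ifs at h <;> split_ifs <;> omega

lemma trC_rev (hk : 2 ≤ k) (e o : Fin (2*k+2)) (hpe : e.val % 2 = 0) (hpo : o.val % 2 = 1)
    (h : coO (k+1) o.val + 1 = coE (k+1) e.val ∨
      (coE (k+1) e.val = 0 ∧ coO (k+1) o.val + 1 = k+1)) : o + 1 = e := by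
  have he := e.isLt; have ho := o.isLt
  apply Fin.ext
  rw [val_add_one]
  unfold coE coO at h
  rcases h with h | ⟨h1, h2⟩
  · split_ifs at h <;> split_ifs <;> omega
  · split_ifs at h1 h2 <;> split_ifs <;>
      first | exact h1.elim | (try exact h2.elim); omega

end Aux

theorem statement2 (k : ℕ) (hk : 2 ≤ k) :
    Nonempty (schrijverGraph (2 * k + 2) k →g shiftGraph 4) := by
  classical
  have hq : 3 ≤ k + 1 := by omega
  have hex : ∀ v : {A : Finset (Fin (2*k+2)) // A.card = k ∧ IsStableSet A},
      ∃ p : Fin (2*k+2) × Fin (2*k+2), p.1.val % 2 = 0 ∧ p.2.val % 2 = 1 ∧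
        ∀ i, (i ∉ v.1 ∧ i + 1 ∉ v.1) ↔ (i = p.1 ∨ i = p.2) := by
    intro v
    obtain ⟨e, o, h1, h2, h3⟩ := markers_exist v.1 v.2.2 v.2.1
    exact ⟨(e, o), h1, h2, h3⟩
  choose mk hme hmo hcrit using hex
  let av : {A : Finset (Fin (2*k+2)) // A.card = k ∧ IsStableSet A} → ℕ :=
    fun v => coE (k+1) (mk v).1.val
  let bv : {A : Finset (Fin (2*k+2)) // A.card = k ∧ IsStableSet A} → ℕ :=
    fun v => coO (k+1) (mk v).2.val
  let f : {A : Finset (Fin (2*k+2)) // A.card = k ∧ IsStableSet A} →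
      {p : Fin 4 × Fin 4 // p.1 ≠ p.2} := fun v =>
    ⟨(⟨(Ftab (k+1) (av v) (bv v)).1, (Ftab_lt4 (k+1) (av v) (bv v)).1⟩,
      ⟨(Ftab (k+1) (av v) (bv v)).2, (Ftab_lt4 (k+1) (av v) (bv v)).2⟩),
      fun h => Ftab_ne (k+1) (av v) (bv v) (congrArg Fin.val h)⟩
  refine ⟨⟨f, ?_⟩⟩
  intro x y hadj
  obtain ⟨hd, hne⟩ := hadj
  have hrel := rel_of_disjoint hk x.2.2 y.2.2 x.2.1 y.2.1 hd
    (hme x) (hmo x) (hme y) (hmo y) (hcrit x) (hcrit y)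
  have hhyp :
      (((av y = bv x ∨ av y = bv x + 1 ∨ (bv x + 1 = k+1 ∧ av y = 0)) ∧
        (bv y = av x ∨ bv y + 1 = av x ∨ (av x = 0 ∧ bv y + 1 = k+1))) ∧
        (¬ (bv x = av x ∨ bv x + 1 = av x ∨ (av x = 0 ∧ bv x + 1 = k+1)) ∨
         ¬ (bv y = av y ∨ bv y + 1 = av y ∨ (av y = 0 ∧ bv y + 1 = k+1)))) ∨
      ((bv x + 1 = av x ∨ (av x = 0 ∧ bv x + 1 = k+1)) ∧ bv y = av y) ∨
      (bv x = av x ∧ (bv y + 1 = av y ∨ (av y = 0 ∧ bv y + 1 = k+1))) := by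
    rcases hrel with ⟨⟨h1, h2⟩, hfar⟩ | ⟨hA, hB⟩ | ⟨hA, hB⟩
    · refine Or.inl ⟨⟨?_, ?_⟩, ?_⟩
      · rcases h1 with h | h
        · rcases trA hk _ _ (hme y) (hmo x) h with h' | h'
          · exact Or.inr (Or.inl h')
          · exact Or.inr (Or.inr ⟨h'.1, h'.2⟩)
        · exact Or.inl (trB hk _ _ (hme y) (hmo x) h)
      · rcases h2 with h | h
        · exact Or.inl (trB hk _ _ (hme x) (hmo y) h.symm).symm
        · rcases trC hk _ _ (hme x) (hmo y) h with h' | h'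
          · exact Or.inr (Or.inl h')
          · exact Or.inr (Or.inr ⟨h'.1, h'.2⟩)
      · rcases hfar with hf | hf
        · refine Or.inl ?_
          intro hcon
          apply hf
          rcases hcon with h | h | h
          · exact Or.inr (trB_rev hk _ _ (hme x) (hmo x) h)
          · exact Or.inl (trC_rev hk _ _ (hme x) (hmo x) (Or.inl h))
          · exact Or.inl (trC_rev hk _ _ (hme x) (hmo x) (Or.inr ⟨h.1, h.2⟩))
        · refine Or.inr ?_
          intro hcon
          apply hf
          rcases hcon with h | h | h
          · exact Or.inr (trB_rev hk _ _ (hme y) (hmo y) h)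
          · exact Or.inl (trC_rev hk _ _ (hme y) (hmo y) (Or.inl h))
          · exact Or.inl (trC_rev hk _ _ (hme y) (hmo y) (Or.inr ⟨h.1, h.2⟩))
    · refine Or.inr (Or.inl ⟨?_, ?_⟩)
      · rcases trC hk _ _ (hme x) (hmo x) hA with h' | h'
        · exact Or.inl h'
        · exact Or.inr ⟨h'.1, h'.2⟩
      · exact (trB hk _ _ (hme y) (hmo y) hB).symm
    · refine Or.inr (Or.inr ⟨?_, ?_⟩)
      · exact (trB hk _ _ (hme x) (hmo x) hA).symm
      · rcases trC hk _ _ (hme y) (hmo y) hB with h' | h'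
        · exact Or.inl h'
        · exact Or.inr ⟨h'.1, h'.2⟩
  have hcomp := Ftab_compat (k+1) (av x) (bv x) (av y) (bv y) hq
    (coE_lt hk _) (coO_lt hk _) (coE_lt hk _) (coO_lt hk _) hhyp
  show (f x).1.2 = (f y).1.1 ∨ (f x).1.1 = (f y).1.2
  rcases hcomp with h | h
  · exact Or.inl (Fin.ext h)
  · exact Or.inr (Fin.ext h)
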